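/- For every nontrivial braid b in B_3^+, there exists C ∈ {0, 1, 2} such that ‖b‖ = |b| − p − d(b) + C, where p is the breadth of b and d(b) is the maximal d ≥ 0 such that Δ3^d is a right divisor of b. -/

import Mathlib

namespace Braid3

/-! ### The positive 3-strand braid monoid
presented by σ1, σ2 (letters `0`, `1` of `Fin 2`) with the relation σ1σ2σ1 = σ2σ1σ2. -/

def braidRel : FreeMonoid (Fin 2) → FreeMonoid (Fin 2) → Prop := fun u v =>
  u = FreeMonoid.of 0 * FreeMonoid.of 1 * FreeMonoid.of 0 ∧
  v = FreeMonoid.of 1 * FreeMonoid.of 0 * FreeMonoid.of 1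

def braidCon : Con (FreeMonoid (Fin 2)) := conGen braidRel

/-- The positive 3-strand braid monoid `B₃⁺`. -/
abbrev B3P := braidCon.Quotient

/-- The element of `B₃⁺` represented by a word on the alphabet {σ1, σ2}. -/
def mkw (w : List (Fin 2)) : B3P := braidCon.mk' (FreeMonoid.ofList w)

/-- σ1 as an element of B₃⁺. -/
def s1 : B3P := mkw [0]
/-- σ2 as an element of B₃⁺. -/
def s2 : B3P := mkw [1]
/-- Garside's fundamental braid Δ₃ = σ1σ2σ1. -/
def Δ : B3P := mkw [0, 1, 0]

/-! ### The 3-strand braid group B₃, with the same presentation. -/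

def grpRels : Set (FreeGroup (Fin 2)) :=
  { FreeGroup.of 0 * FreeGroup.of 1 * FreeGroup.of 0 *
    (FreeGroup.of 1 * FreeGroup.of 0 * FreeGroup.of 1)⁻¹ }

abbrev B3 := PresentedGroup grpRels

def g (i : Fin 2) : B3 := PresentedGroup.of i

theorem grp_braid_rel : g 0 * g 1 * g 0 = g 1 * g 0 * g 1 := by
  show (QuotientGroup.mk (FreeGroup.of 0 * FreeGroup.of 1 * FreeGroup.of 0) : B3)
      = QuotientGroup.mk (FreeGroup.of 1 * FreeGroup.of 0 * FreeGroup.of 1)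
  rw [QuotientGroup.eq]
  have h : (FreeGroup.of 0 * FreeGroup.of 1 * FreeGroup.of 0 *
      (FreeGroup.of 1 * FreeGroup.of 0 * FreeGroup.of 1)⁻¹ : FreeGroup (Fin 2)) ∈
      Subgroup.normalClosure grpRels :=
    Subgroup.subset_normalClosure rfl
  have h2 := (Subgroup.normalClosure_normal (s := grpRels)).conj_mem _ h
      (FreeGroup.of 0 * FreeGroup.of 1 * FreeGroup.of 0)⁻¹
  simp only [inv_inv] at h2
  have h3 : ((FreeGroup.of 0 * FreeGroup.of 1 * FreeGroup.of 0 : FreeGroup (Fin 2)))⁻¹ *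
      (FreeGroup.of 0 * FreeGroup.of 1 * FreeGroup.of 0 *
        (FreeGroup.of 1 * FreeGroup.of 0 * FreeGroup.of 1)⁻¹) *
      (FreeGroup.of 0 * FreeGroup.of 1 * FreeGroup.of 0) =
      ((FreeGroup.of 0 * FreeGroup.of 1 * FreeGroup.of 0 : FreeGroup (Fin 2))⁻¹ *
        (FreeGroup.of 1 * FreeGroup.of 0 * FreeGroup.of 1))⁻¹ := by
    group
  rw [h3] at h2
  exact (Subgroup.inv_mem_iff _).mp h2

/-- The canonical embedding of B₃⁺ into B₃. -/
def ι : B3P →* B3 :=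
  Con.lift _ (FreeMonoid.lift fun i => g i) (by
    apply Con.conGen_le.mpr
    rintro u v ⟨hu, hv⟩
    subst hu; subst hv
    rw [Con.ker_rel]
    simp only [map_mul, FreeMonoid.lift_eval_of]
    exact grp_braid_rel)

/-! ### The braid order -/

/-- Evaluation in B₃ of a word on the letters σ1^{±1}, σ2^{±1}
(a letter `(i, true)` is σ_{i+1}, a letter `(i, false)` is σ_{i+1}⁻¹). -/
def evalSW (w : List (Fin 2 × Bool)) : B3 :=
  (w.map fun l => if l.2 then g l.1 else (g l.1)⁻¹).prod

/-- A signed word is σ-positive if the generator of highest occurring index occurs,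
and occurs only positively. -/
def SigmaPos (w : List (Fin 2 × Bool)) : Prop :=
  ∃ i : Fin 2, (i, true) ∈ w ∧ (i, false) ∉ w ∧ ∀ l ∈ w, l.1 ≤ i

/-- The braid order on the group B₃. -/
def gLt (a b : B3) : Prop := ∃ w, SigmaPos w ∧ evalSW w = a⁻¹ * b

/-- The braid order on B₃⁺. -/
def blt (a b : B3P) : Prop := gLt (ι a) (ι b)

def ble (a b : B3P) : Prop := blt a b ∨ a = b

/-! ### ϕ-normal words and exponent sequences -/

/-- The minimal legal sizes e_k^min. -/
def emin : ℕ → ℕ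
  | 1 => 0
  | 2 => 1
  | _ => 2

/-- The letter of the k-th block (1-based, from the right): σ1 for odd k, σ2 for even k. -/
def letterOf (k : ℕ) : Fin 2 := if k % 2 = 1 then 0 else 1

/-- The word σ_{[p]}^{e_p} ⋯ σ2^{e_2} σ1^{e_1} associated with the exponent
sequence `E = [e_p, …, e_1]`. -/
def wordOfExpSeq : List ℕ → List (Fin 2)
  | [] => []
  | e :: rest => List.replicate e (letterOf (rest.length + 1)) ++ wordOfExpSeq rest

/-- `expAt E k` is e_k, the k-th entry of the exponent sequence counted from the right,
1-based. -/
def expAt (E : List ℕ) (k : ℕ) : ℕ := E.getD (E.length - k) 0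

/-- `E = [e_p, …, e_1]` is the exponent sequence of a ϕ-normal word: the final block
decomposition is minimal (leading exponent nonzero) and e_k ≥ e_k^min for k < p. -/
def IsNormalSeq (E : List ℕ) : Prop :=
  E ≠ [] ∧ 1 ≤ expAt E E.length ∧ ∀ k, 1 ≤ k → k < E.length → emin k ≤ expAt E k

/-- A word on {σ1, σ2} is ϕ-normal if its (minimal) block decomposition
σ_{[p]}^{e_p} ⋯ σ2^{e_2} σ1^{e_1} satisfies e_k ≥ e_k^min for k < p. -/
def IsPhiNormalWord (w : List (Fin 2)) : Prop :=
  ∃ E, IsNormalSeq E ∧ w = wordOfExpSeq E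

/-- `E` is the exponent sequence of the braid `b`. -/
def HasExpSeq (b : B3P) (E : List ℕ) : Prop :=
  IsNormalSeq E ∧ mkw (wordOfExpSeq E) = b

/-- The exponent sequence of a (nontrivial) braid of B₃⁺. -/
noncomputable def expSeqOf (b : B3P) : List ℕ := by
  classical exact if h : ∃ E, HasExpSeq b E then h.choose else []

/-- The critical position of an exponent sequence: the least r < p with e_r > e_r^min
if it exists, and p otherwise. -/
noncomputable def critPos (E : List ℕ) : ℕ := by
  classical exact
    if h : ∃ r, 1 ≤ r ∧ r < E.length ∧ emin r < expAt E r then Nat.find h else E.length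

/-- The effect of the operation b ↦ b{t} on exponent sequences: remove one letter from
the critical block, and add t letters to the next block if the latter exists. -/
noncomputable def stepSeq (E : List ℕ) (t : ℕ) : List ℕ :=
  let p := E.length
  let r := critPos E
  let E1 := E.set (p - r) (expAt E r - 1)
  if 2 ≤ r then E1.set (p - (r - 1)) (expAt E (r - 1) + t) else E1

/-- The operation b ↦ b{t} of Definition 2.2 (with 1{t} = 1). -/
noncomputable def step (b : B3P) (t : ℕ) : B3P := by
  classical exact if b = 1 then 1 else mkw (wordOfExpSeq (stepSeq (expSeqOf b) t))

/-- The G₃-sequence from b: `gseq b 0 = b`, `gseq b t = (gseq b (t-1)){t}`. -/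
noncomputable def gseq (b : B3P) : ℕ → B3P
  | 0 => b
  | t + 1 => step (gseq b t) (t + 1)

/-- T(b): the length of the G₃-sequence from b, i.e. the least t with b{1}{2}⋯{t} = 1. -/
noncomputable def T (b : B3P) : ℕ := sInf {t | gseq b t = 1}

/-! ### The ordinal of a 3-braid, fundamental sequences, the Hardy hierarchy -/

open Ordinal in
/-- Sum Σ ω^{k-1}·(e_k − e_k^min) over the tail of an exponent sequence. -/
noncomputable def ordSeqAux : List ℕ → Ordinal
  | [] => 0
  | e :: rest =>
    omega0 ^ (rest.length : Ordinal) * ((e - emin (rest.length + 1) : ℕ) : Ordinal)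
      + ordSeqAux rest

open Ordinal in
/-- ord of an exponent sequence (e_p, …, e_1):
ω^{p−1}·e_p + Σ_{p>k≥1} ω^{k−1}·(e_k − e_k^min). -/
noncomputable def ordSeq : List ℕ → Ordinal
  | [] => 0
  | e :: rest => omega0 ^ (rest.length : Ordinal) * (e : Ordinal) + ordSeqAux rest

/-- The ordinal ord(b) < ω^ω attached to a braid of B₃⁺ (with ord(1) = 0). -/
noncomputable def ordOf (b : B3P) : Ordinal := ordSeq (expSeqOf b)

open Ordinal in
/-- Fundamental sequences: 0[x] = 0, (α+1)[x] = α, (γ + ω^{r+1})[x] = γ + ω^r·x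
(CNF decomposition), and (ω^ω)[x] = ω^x. -/
noncomputable def fundSeq (α : Ordinal) (x : ℕ) : Ordinal :=
  open scoped Classical in
  if α = 0 then 0
  else if h : ∃ β, α = β + 1 then h.choose
  else if α = omega0 ^ omega0 then omega0 ^ (x : Ordinal)
  else if h : ∃ p : Ordinal × ℕ, α = p.1 + omega0 ^ ((p.2 : Ordinal) + 1) ∧
      omega0 ^ ((p.2 : Ordinal) + 1) ∣ p.1
    then h.choose.1 + omega0 ^ (h.choose.2 : Ordinal) * (x : Ordinal)
  else 0

open Ordinal in
theorem fundSeq_lt (α : Ordinal) (x : ℕ) (h0 : ¬α = 0) (hs : ¬∃ β, α = β + 1) :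
    fundSeq α x < α := by
  classical
  rw [fundSeq]
  rw [if_neg h0, dif_neg hs]
  by_cases hw : α = omega0 ^ omega0
  · rw [if_pos hw, hw]
    exact (Ordinal.opow_lt_opow_iff_right Ordinal.one_lt_omega0).mpr (Ordinal.nat_lt_omega0 x)
  · rw [if_neg hw]
    by_cases hd : ∃ p : Ordinal × ℕ, α = p.1 + omega0 ^ ((p.2 : Ordinal) + 1) ∧
        omega0 ^ ((p.2 : Ordinal) + 1) ∣ p.1
    · rw [dif_pos hd]
      obtain ⟨hα, -⟩ := hd.choose_spec
      have hlt : omega0 ^ ((hd.choose.2 : Ordinal)) * (x : Ordinal)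
          < omega0 ^ ((hd.choose.2 : Ordinal) + 1) := by
        rw [Ordinal.add_one_eq_succ, Ordinal.opow_succ]
        exact (mul_lt_mul_iff_right₀
          (Ordinal.opow_pos _ Ordinal.omega0_pos)).mpr (Ordinal.nat_lt_omega0 x)
      calc hd.choose.1 + omega0 ^ (hd.choose.2 : Ordinal) * (x : Ordinal)
          < hd.choose.1 + omega0 ^ ((hd.choose.2 : Ordinal) + 1) :=
            (add_lt_add_iff_left _).mpr hlt
        _ = α := hα.symm
    · rw [dif_neg hd]
      exact pos_iff_ne_zero.mpr h0

open Ordinal in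
open scoped Classical in
/-- The Hardy hierarchy: H_0(x) = x, H_{α+1}(x) = H_α(x+1), H_λ(x) = H_{λ[x]}(x+1). -/
noncomputable def hardy (α : Ordinal) (x : ℕ) : ℕ :=
  if α = 0 then x
  else if h : ∃ β, α = β + 1 then hardy h.choose (x + 1)
  else hardy (fundSeq α x) (x + 1)
termination_by α
decreasing_by
  · have hs := h.choose_spec
    have h2 : h.choose < h.choose + 1 := by
      rw [Ordinal.add_one_eq_succ]; exact Order.lt_succ _
    exact lt_of_lt_of_eq h2 hs.symm
  · exact fundSeq_lt _ _ (by assumption) (by assumption)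

/-! ### Garside complexity -/

/-- The Garside complexity ‖b‖: the least ℓ such that b left-divides Δ₃^ℓ. -/
noncomputable def compl (b : B3P) : ℕ := sInf {ℓ | ∃ c, b * c = Δ ^ ℓ}


/-! ### Auxiliary development: a concrete normal form for B₃⁺ -/

/-- Nontrivial simple elements of B₃⁺ (divisors of Δ): σ1, σ2, σ1σ2, σ2σ1, Δ. -/
inductive Sp : Type | sa | sb | sab | sba | sD
deriving DecidableEq

open Sp

/-- The flip automorphism on simples. -/
def phiS : Sp → Sp
  | sa => sb | sb => sa | sab => sba | sba => sab | sD => sD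

theorem phiS_phiS (s : Sp) : phiS (phiS s) = s := by cases s <;> rfl

theorem map_phiS_phiS (L : List Sp) : (L.map phiS).map phiS = L := by
  induction L with
  | nil => rfl
  | cons s r ih => simp [phiS_phiS, ih]

/-- Right multiplication of a factor list (head = rightmost factor) by a generator. -/
def mulR : List Sp → Fin 2 → List Sp
  | [], i => if i = 0 then [sa] else [sb]
  | sa :: r, i => if i = 0 then sa :: sa :: r else sab :: r
  | sb :: r, i => if i = 0 then sba :: r else sb :: sb :: r
  | sab :: r, i => if i = 0 then r.map phiS ++ [sD] else sb :: sab :: r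
  | sba :: r, i => if i = 0 then sa :: sba :: r else r.map phiS ++ [sD]
  | sD :: r, i => if i = 0 then sa :: sD :: r else sb :: sD :: r

def foldW (N : List Sp) (w : List (Fin 2)) : List Sp := w.foldl mulR N

theorem foldW_nil (N : List Sp) : foldW N [] = N := rfl

theorem foldW_cons (N : List Sp) (i : Fin 2) (w : List (Fin 2)) :
    foldW N (i :: w) = foldW (mulR N i) w := rfl

theorem foldW_append (N : List Sp) (u v : List (Fin 2)) :
    foldW N (u ++ v) = foldW (foldW N u) v := List.foldl_append ..

/-- Admissibility (left-greedy normality) of a pair of adjacent simple factors: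
`adm u v` with `u` the left factor and `v` the right factor. -/
def adm (u v : Sp) : Bool :=
  match v with
  | sa => u == sa || u == sba || u == sD
  | sab => u == sa || u == sba || u == sD
  | sb => u == sb || u == sab || u == sD
  | sba => u == sb || u == sab || u == sD
  | sD => u == sD

theorem adm_phiS (u v : Sp) : adm (phiS u) (phiS v) = adm u v := by
  cases u <;> cases v <;> rfl

theorem adm_sD_left (v : Sp) : adm sD v = true := by cases v <;> rfl

theorem adm_sD_right {u : Sp} (h : adm u sD = true) : u = sD := by
  cases u <;> simp [adm] at h <;> try rfl

/-- Validity of a factor list: adjacent factors form admissible pairs.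
(The list is read right-to-left, so for adjacent entries `x :: y :: _`,
`y` is the left factor.) -/
def Valid (L : List Sp) : Prop := L.Chain' (fun x y => adm y x = true)

theorem valid_nil : Valid [] := List.isChain_nil

theorem Valid.tail' {s : Sp} {r : List Sp} (h : Valid (s :: r)) : Valid r :=
  (List.isChain_cons.mp h).2

theorem valid_pair {s t : Sp} {r : List Sp} (h : Valid (s :: t :: r)) : adm t s = true :=
  (List.isChain_cons_cons.mp h).1

theorem valid_map_phiS {L : List Sp} (h : Valid L) : Valid (L.map phiS) := by
  unfold Valid at *
  unfold List.Chain' at *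
  rw [List.isChain_map]
  exact h.imp (fun a b hab => by rw [adm_phiS]; exact hab)

theorem valid_append_D {L : List Sp} (h : Valid L) : Valid (L ++ [sD]) := by
  unfold Valid at *
  unfold List.Chain' at *
  rw [List.isChain_append]
  refine ⟨h, List.isChain_singleton _, ?_⟩
  intro x _ y hy
  simp at hy
  subst hy
  exact adm_sD_left x

theorem valid_cons_of {m : Sp} {r : List Sp} (htail : Valid r)
    (h : ∀ b ∈ r.head?, adm b m = true) : Valid (m :: r) :=
  List.isChain_cons.mpr ⟨h, htail⟩

theorem valid_mulR {L : List Sp} (h : Valid L) (i : Fin 2) : Valid (mulR L i) := by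
  rcases L with _ | ⟨s, r⟩
  · by_cases hi : i = 0 <;> simp [mulR, hi, Valid, List.Chain']
  · have htail : Valid r := h.tail'
    have hmap : Valid (r.map phiS ++ [sD]) := valid_append_D (valid_map_phiS htail)
    have hpair : ∀ b ∈ r.head?, adm b s = true := by
      rcases r with _ | ⟨t, r'⟩
      · intro b hb; simp at hb
      · intro b hb; simp at hb; subst hb; exact valid_pair h
    by_cases hi : i = 0 <;> cases s <;> simp only [mulR, hi, if_true, if_false]
    -- (sa, 0) push
    · exact List.isChain_cons_cons.mpr ⟨rfl, h⟩
    -- (sb, 0) absorb → sba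
    · exact valid_cons_of htail (fun b hb => by
        have := hpair b hb; cases b <;> simp_all [adm])
    -- (sab, 0) bubble
    · exact hmap
    -- (sba, 0) push
    · exact List.isChain_cons_cons.mpr ⟨rfl, h⟩
    -- (sD, 0) push
    · exact List.isChain_cons_cons.mpr ⟨rfl, h⟩
    -- (sa, 1) absorb → sab
    · exact valid_cons_of htail (fun b hb => by
        have := hpair b hb; cases b <;> simp_all [adm])
    -- (sb, 1) push
    · exact List.isChain_cons_cons.mpr ⟨rfl, h⟩
    -- (sab, 1) push
    · exact List.isChain_cons_cons.mpr ⟨rfl, h⟩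
    -- (sba, 1) bubble
    · exact hmap
    -- (sD, 1) push
    · exact List.isChain_cons_cons.mpr ⟨rfl, h⟩

theorem valid_foldW {N : List Sp} (h : Valid N) (w : List (Fin 2)) : Valid (foldW N w) := by
  induction w generalizing N with
  | nil => exact h
  | cons i w ih => exact ih (valid_mulR h i)

/-- The crucial local confluence: from any valid state, multiplying by
σ1σ2σ1 and by σ2σ1σ2 yields the same factor list. -/
theorem key_rel : ∀ L : List Sp, Valid L → foldW L [0, 1, 0] = foldW L [1, 0, 1] := by
  intro L hV
  rcases L with _ | ⟨s, r⟩
  · rfl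
  · have hpair : ∀ t r', r = t :: r' → adm t s = true := by
      intro t r' hr; subst hr; exact valid_pair hV
    cases s
    · -- s = sa
      rcases r with _ | ⟨t, r'⟩
      · rfl
      · have ht := hpair t r' rfl
        cases t <;> simp_all [adm] <;> simp [foldW, mulR, phiS]
    · -- s = sb
      rcases r with _ | ⟨t, r'⟩
      · rfl
      · have ht := hpair t r' rfl
        cases t <;> simp_all [adm] <;> simp [foldW, mulR, phiS]
    · -- s = sab
      rcases r with _ | ⟨t, r'⟩
      · rfl
      · have ht := hpair t r' rfl
        cases t <;> simp_all [adm] <;> simp [foldW, mulR, phiS]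
    · -- s = sba
      rcases r with _ | ⟨t, r'⟩
      · rfl
      · have ht := hpair t r' rfl
        cases t <;> simp_all [adm] <;> simp [foldW, mulR, phiS]
    · -- s = sD
      simp [foldW, mulR, phiS]

/-- The congruence of "same fold action from every valid state". -/
def nfCon : Con (FreeMonoid (Fin 2)) where
  r u v := ∀ N, Valid N → foldW N u.toList = foldW N v.toList
  iseqv :=
    { refl := fun _ _ _ => rfl
      symm := fun h N hN => (h N hN).symm
      trans := fun h1 h2 N hN => (h1 N hN).trans (h2 N hN) }
  mul' := by
    intro w x y z h1 h2 N hN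
    show foldW N (w * y).toList = foldW N (x * z).toList
    rw [FreeMonoid.toList_mul, FreeMonoid.toList_mul, foldW_append, foldW_append,
      h1 N hN, h2 (foldW N x.toList) (valid_foldW hN _)]

theorem braidCon_le_nfCon : braidCon ≤ nfCon := by
  apply Con.conGen_le.mpr
  rintro x y ⟨hx, hy⟩
  subst hx; subst hy
  intro N hN
  exact key_rel N hN

theorem foldW_eq_of_mkw_eq {u v : List (Fin 2)} (h : mkw u = mkw v) :
    ∀ N, Valid N → foldW N u = foldW N v := by
  have hc : braidCon (FreeMonoid.ofList u) (FreeMonoid.ofList v) := by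
    rw [← Con.eq]
    exact h
  have := braidCon_le_nfCon hc
  intro N hN
  have h2 := this N hN
  rwa [FreeMonoid.toList_ofList, FreeMonoid.toList_ofList] at h2

theorem mkw_surj (c : B3P) : ∃ u : List (Fin 2), mkw u = c := by
  obtain ⟨m, hm⟩ := Con.mk'_surjective (c := braidCon) c
  exact ⟨m.toList, by rwa [mkw, FreeMonoid.ofList_toList]⟩

theorem mkw_append (u v : List (Fin 2)) : mkw (u ++ v) = mkw u * mkw v := by
  rw [mkw, mkw, mkw, ← map_mul]
  rfl

theorem mkw_cons (i : Fin 2) (u : List (Fin 2)) : mkw (i :: u) = mkw [i] * mkw u :=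
  mkw_append [i] u

theorem rel_s : mkw [0, 1, 0] = mkw [1, 0, 1] :=
  (Con.eq braidCon).mpr (ConGen.Rel.of _ _ ⟨rfl, rfl⟩)

def genB (i : Fin 2) : B3P := mkw [i]

def evS : Sp → B3P
  | sa => genB 0
  | sb => genB 1
  | sab => genB 0 * genB 1
  | sba => genB 1 * genB 0
  | sD => Δ

/-- Evaluation of a factor list (head = rightmost factor) in B₃⁺. -/
def evL (L : List Sp) : B3P := (L.reverse.map evS).prod

theorem evL_nil : evL [] = 1 := rfl

theorem evL_cons (s : Sp) (L : List Sp) : evL (s :: L) = evL L * evS s := by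
  simp [evL]

theorem evL_append (A B : List Sp) : evL (A ++ B) = evL B * evL A := by
  simp [evL]

/-- The flip as a letter map. -/
def swapF (i : Fin 2) : Fin 2 := if i = 0 then 1 else 0

theorem swapF_swapF (i : Fin 2) : swapF (swapF i) = i := by fin_cases i <;> rfl

/-- The flip automorphism of B₃⁺. -/
def phiB : B3P →* B3P :=
  Con.lift braidCon (braidCon.mk'.comp (FreeMonoid.map swapF)) (by
    apply Con.conGen_le.mpr
    rintro x y ⟨hx, hy⟩
    subst hx; subst hy
    rw [Con.ker_rel]
    exact (rel_s).symm)

theorem phiB_mkw (u : List (Fin 2)) : phiB (mkw u) = mkw (u.map swapF) := by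
  rw [mkw, phiB]
  erw [Con.lift_mk']
  rfl

theorem phiB_phiB (x : B3P) : phiB (phiB x) = x := by
  obtain ⟨u, rfl⟩ := mkw_surj x
  rw [phiB_mkw, phiB_mkw, List.map_map]
  congr 1
  calc u.map (swapF ∘ swapF) = u.map id := by
        apply List.map_congr_left
        intro a _
        exact swapF_swapF a
  _ = u := List.map_id u

theorem genB_delta (i : Fin 2) : genB i * Δ = Δ * genB (swapF i) := by
  fin_cases i
  · show mkw [0] * mkw [0, 1, 0] = mkw [0, 1, 0] * mkw [1]
    rw [← mkw_append, ← mkw_append]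
    show mkw ([0] ++ [0, 1, 0]) = mkw ([0] ++ [1, 0, 1])
    rw [mkw_append, mkw_append, rel_s]
  · show mkw [1] * mkw [0, 1, 0] = mkw [0, 1, 0] * mkw [0]
    rw [← mkw_append, ← mkw_append]
    show mkw ([1, 0, 1] ++ [0]) = mkw ([0, 1, 0] ++ [0])
    rw [mkw_append, mkw_append, rel_s]

theorem delta_comm (x : B3P) : x * Δ = Δ * phiB x := by
  obtain ⟨u, rfl⟩ := mkw_surj x
  induction u with
  | nil =>
    show mkw [] * Δ = Δ * phiB (mkw [])
    have h1 : mkw [] = 1 := map_one braidCon.mk'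
    rw [h1, map_one, one_mul, mul_one]
  | cons i u ih =>
    have hphi : phiB (mkw [i]) = genB (swapF i) := by rw [phiB_mkw]; rfl
    calc mkw (i :: u) * Δ = mkw [i] * (mkw u * Δ) := by rw [mkw_cons, mul_assoc]
    _ = mkw [i] * (Δ * phiB (mkw u)) := by rw [ih]
    _ = (genB i * Δ) * phiB (mkw u) := by rw [mul_assoc]; rfl
    _ = Δ * genB (swapF i) * phiB (mkw u) := by rw [genB_delta]
    _ = Δ * (phiB (mkw [i]) * phiB (mkw u)) := by rw [mul_assoc, hphi]
    _ = Δ * phiB (mkw (i :: u)) := by rw [← map_mul, ← mkw_cons]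

theorem delta_comm' (x : B3P) : Δ * x = phiB x * Δ := by
  conv_lhs => rw [← phiB_phiB x]
  rw [← delta_comm (phiB x)]

theorem delta_pow_comm (k : ℕ) (x : B3P) : Δ ^ k * x = (phiB^[k] x) * Δ ^ k := by
  induction k generalizing x with
  | zero => simp
  | succ k ih =>
    have h1 : Δ ^ (k + 1) * x = Δ ^ k * (phiB x * Δ) := by
      rw [pow_succ, mul_assoc, delta_comm']
    rw [h1, ← mul_assoc, ih (phiB x), ← Function.iterate_succ_apply, mul_assoc, ← pow_succ]

theorem evS_phiS (s : Sp) : evS (phiS s) = phiB (evS s) := by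
  have h0 : phiB (genB 0) = genB 1 := by rw [show genB 0 = mkw [0] from rfl, phiB_mkw]; rfl
  have h1 : phiB (genB 1) = genB 0 := by rw [show genB 1 = mkw [1] from rfl, phiB_mkw]; rfl
  have hD : phiB Δ = Δ := by
    show phiB (mkw [0, 1, 0]) = mkw [0, 1, 0]
    rw [phiB_mkw]
    exact (rel_s).symm
  cases s <;> simp [evS, phiS, map_mul, h0, h1, hD]

theorem evL_map_phiS (L : List Sp) : evL (L.map phiS) = phiB (evL L) := by
  unfold evL
  rw [← List.map_reverse, List.map_map]
  rw [show evS ∘ phiS = phiB ∘ evS from funext evS_phiS, ← List.map_map]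
  exact (map_list_prod phiB _).symm

theorem sab_mul : evS sab * genB 0 = Δ := by
  show genB 0 * genB 1 * genB 0 = mkw [0, 1, 0]
  rw [show (mkw [0,1,0] : B3P) = mkw ([0] ++ [1] ++ [0]) from rfl, mkw_append, mkw_append]
  rfl

theorem sba_mul : evS sba * genB 1 = Δ := by
  show genB 1 * genB 0 * genB 1 = mkw [0, 1, 0]
  rw [rel_s, show (mkw [1,0,1] : B3P) = mkw ([1] ++ [0] ++ [1]) from rfl, mkw_append, mkw_append]
  rfl

theorem evL_bubble {i : Fin 2} (s : Sp) (r : List Sp) (h : evS s * genB i = Δ) :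
    evL (r.map phiS ++ [sD]) = evL (s :: r) * genB i := by
  have h1 : evL (r.map phiS ++ [sD]) = Δ * phiB (evL r) := by
    have h2 : evL [sD] = Δ := by simp [evL, evS]
    rw [evL_append, evL_map_phiS, h2]
  rw [h1, ← delta_comm, evL_cons, mul_assoc]
  try rw [h]

theorem evL_mulR (L : List Sp) (i : Fin 2) : evL (mulR L i) = evL L * genB i := by
  by_cases hi : i = 0
  · subst hi
    rcases L with _ | ⟨s, r⟩
    · simp [mulR, evL, evS, genB]
    · cases s <;> simp only [mulR, if_true, if_pos rfl]
      · rw [evL_cons]; rfl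
      · rw [evL_cons, evL_cons]; exact (mul_assoc _ _ _).symm
      · exact evL_bubble sab r sab_mul
      · rw [evL_cons, evL_cons]; rfl
      · rw [evL_cons, evL_cons]; rfl
  · have hi1 : i = 1 := Fin.eq_one_of_ne_zero i hi
    subst hi1
    have hne : ¬((1 : Fin 2) = 0) := by decide
    rcases L with _ | ⟨s, r⟩
    · simp [mulR, evL, evS, genB, hne]
    · cases s <;> simp only [mulR, if_neg hne]
      · rw [evL_cons, evL_cons]; exact (mul_assoc _ _ _).symm
      · rw [evL_cons]; rfl
      · rw [evL_cons, evL_cons]; rfl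
      · exact evL_bubble sba r sba_mul
      · rw [evL_cons, evL_cons]; rfl

theorem evL_foldW (N : List Sp) (w : List (Fin 2)) : evL (foldW N w) = evL N * mkw w := by
  induction w generalizing N with
  | nil =>
    rw [foldW_nil]
    have h1 : mkw [] = 1 := map_one braidCon.mk'
    rw [h1, mul_one]
  | cons i w ih =>
    rw [foldW_cons, ih, evL_mulR, mkw_cons, mul_assoc]
    rfl

theorem mkw_sound (w : List (Fin 2)) : mkw w = evL (foldW [] w) := by
  rw [evL_foldW, evL_nil, one_mul]

/-- Number of Δ factors in a factor list. -/
def cntD (L : List Sp) : ℕ := L.count sD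

/-- The complexity weight of a factor list: length plus number of Δ's. -/
def muS (L : List Sp) : ℕ := L.length + cntD L

theorem cntD_nil : cntD [] = 0 := rfl

theorem cntD_cons_D (L : List Sp) : cntD (sD :: L) = cntD L + 1 := by
  simp [cntD, List.count_cons]

theorem cntD_cons_ne {s : Sp} (h : s ≠ sD) (L : List Sp) : cntD (s :: L) = cntD L := by
  simp [cntD, List.count_cons, h]

theorem cntD_map_phiS (L : List Sp) : cntD (L.map phiS) = cntD L := by
  induction L with
  | nil => rfl
  | cons s r ih =>
    cases s <;> simp [cntD, List.count_cons, phiS] at * <;> omega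

theorem cntD_bubble (r : List Sp) : cntD (r.map phiS ++ [sD]) = cntD r + 1 := by
  have := cntD_map_phiS r
  simp [cntD, List.count_append] at *
  omega

theorem cntD_append (A B : List Sp) : cntD (A ++ B) = cntD A + cntD B := by
  simp [cntD, List.count_append]

theorem cntD_replicate_ne {s : Sp} (h : s ≠ sD) (n : ℕ) : cntD (List.replicate n s) = 0 := by
  simp [cntD, List.count_replicate, h]

theorem cntD_replicate_D (n : ℕ) : cntD (List.replicate n sD) = n := by
  simp [cntD, List.count_replicate]

theorem length_mulR (L : List Sp) (i : Fin 2) : L.length ≤ (mulR L i).length := by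
  rcases L with _ | ⟨s, r⟩
  · by_cases hi : i = 0 <;> simp [mulR, hi]
  · by_cases hi : i = 0 <;> cases s <;> simp [mulR, hi]

theorem length_foldW (N : List Sp) (w : List (Fin 2)) : N.length ≤ (foldW N w).length := by
  induction w generalizing N with
  | nil => exact le_refl _
  | cons i w ih => exact le_trans (length_mulR N i) (ih (mulR N i))

theorem cntD_mulR (L : List Sp) (i : Fin 2) : cntD L ≤ cntD (mulR L i) := by
  rcases L with _ | ⟨s, r⟩
  · by_cases hi : i = 0 <;> simp [mulR, hi, cntD]
  · have hb := cntD_bubble r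
    by_cases hi : i = 0 <;> cases s <;>
      simp only [mulR, hi, if_true, if_false] <;>
      simp [cntD, List.count_cons, List.count_append] at * <;> omega

theorem cntD_foldW (N : List Sp) (w : List (Fin 2)) : cntD N ≤ cntD (foldW N w) := by
  induction w generalizing N with
  | nil => exact le_refl _
  | cons i w ih => exact le_trans (cntD_mulR N i) (ih (mulR N i))

theorem muS_mulR_le (L : List Sp) (i : Fin 2) : muS (mulR L i) ≤ muS L + 1 := by
  rcases L with _ | ⟨s, r⟩
  · by_cases hi : i = 0 <;> simp [mulR, hi, muS, cntD, List.count_cons]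
  · have hb := cntD_bubble r
    have hm := cntD_map_phiS r
    by_cases hi : i = 0 <;> cases s <;>
      simp only [mulR, hi, if_true, if_false] <;>
      simp [muS, cntD, List.count_cons, List.count_append, List.count_replicate] at * <;>
      omega

theorem muS_foldW_le (N : List Sp) (w : List (Fin 2)) : muS (foldW N w) ≤ muS N + w.length := by
  induction w generalizing N with
  | nil => exact le_refl _
  | cons i w ih =>
    calc muS (foldW (mulR N i) w) ≤ muS (mulR N i) + w.length := ih (mulR N i)
    _ ≤ muS N + 1 + w.length := by have := muS_mulR_le N i; omega
    _ = muS N + (i :: w).length := by simp; omega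

def genS (i : Fin 2) : Sp := if i = 0 then sa else sb

def mrg (i : Fin 2) : Sp := if i = 0 then sba else sab

theorem genS_ne_D (i : Fin 2) : genS i ≠ sD := by
  by_cases hi : i = 0 <;> simp [genS, hi]

theorem mrg_ne_D (i : Fin 2) : mrg i ≠ sD := by
  by_cases hi : i = 0 <;> simp [mrg, hi]

theorem mulR_push_gen (L : List Sp) (i : Fin 2) :
    mulR (genS i :: L) i = genS i :: genS i :: L := by
  by_cases hi : i = 0 <;> simp [genS, mulR, hi]

theorem mulR_push_mrg (L : List Sp) (i : Fin 2) :
    mulR (mrg i :: L) i = genS i :: mrg i :: L := by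
  by_cases hi : i = 0 <;> simp [genS, mrg, mulR, hi]

theorem mulR_absorb (L : List Sp) (i : Fin 2) :
    mulR (genS (swapF i) :: L) i = mrg i :: L := by
  by_cases hi : i = 0 <;> simp [genS, mrg, swapF, mulR, hi]

theorem mulR_nil (i : Fin 2) : mulR [] i = [genS i] := by
  by_cases hi : i = 0 <;> simp [genS, mulR, hi]

theorem fold_push (e : ℕ) (L : List Sp) (i : Fin 2) :
    foldW (genS i :: L) (List.replicate e i) = List.replicate e (genS i) ++ genS i :: L := by
  induction e generalizing L with
  | zero => rfl
  | succ e ih =>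
    rw [List.replicate_succ, foldW_cons, mulR_push_gen, ih (genS i :: L)]
    rw [show List.replicate (e+1) (genS i) = List.replicate e (genS i) ++ [genS i] from
      List.replicate_succ' .., List.append_assoc]
    rfl

theorem fold_mrg (e : ℕ) (L : List Sp) (i : Fin 2) :
    foldW (mrg i :: L) (List.replicate e i) = List.replicate e (genS i) ++ mrg i :: L := by
  cases e with
  | zero => rfl
  | succ e =>
    rw [List.replicate_succ, foldW_cons, mulR_push_mrg, fold_push]
    rw [show List.replicate (e+1) (genS i) = List.replicate e (genS i) ++ [genS i] from
      List.replicate_succ' .., List.append_assoc]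
    rfl

theorem runExact (e : ℕ) (he : 1 ≤ e) (T : List Sp) (i : Fin 2) :
    foldW (genS (swapF i) :: T) (List.replicate e i)
      = List.replicate (e - 1) (genS i) ++ mrg i :: T := by
  obtain ⟨e', rfl⟩ : ∃ e', e = e' + 1 := ⟨e - 1, by omega⟩
  rw [List.replicate_succ, foldW_cons, mulR_absorb, fold_mrg]
  simp

theorem fold_nil_rep (e : ℕ) (i : Fin 2) :
    foldW [] (List.replicate e i) = List.replicate e (genS i) := by
  cases e with
  | zero => rfl
  | succ e =>
    rw [List.replicate_succ, foldW_cons, mulR_nil,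
      show ([genS i] : List Sp) = genS i :: [] from rfl, fold_push]
    rw [show List.replicate (e+1) (genS i) = List.replicate e (genS i) ++ [genS i] from
      List.replicate_succ' ..]

theorem muS_rep_gen (e : ℕ) (i : Fin 2) (L : List Sp) :
    muS (List.replicate e (genS i) ++ L) = e + muS L := by
  simp [muS, cntD_append, cntD_replicate_ne (genS_ne_D i)]
  omega

theorem muS_cons_ne {s : Sp} (h : s ≠ sD) (L : List Sp) : muS (s :: L) = muS L + 1 := by
  simp [muS, cntD_cons_ne h]
  omega

theorem muS_bubble {s : Sp} (h : s ≠ sD) (r : List Sp) :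
    muS (r.map phiS ++ [sD]) = muS (s :: r) + 1 := by
  have h1 := cntD_bubble r
  have h2 := cntD_cons_ne h r
  simp [muS] at *
  omega

theorem runLB_push (e : ℕ) (L : List Sp) (i : Fin 2) :
    muS L + (e + 1) ≤ muS (foldW (genS i :: L) (List.replicate e i)) + 1 := by
  rw [fold_push, muS_rep_gen, muS_cons_ne (genS_ne_D i)]
  omega

theorem muS_fold_mrg (e : ℕ) (L : List Sp) (i : Fin 2) :
    muS (foldW (mrg i :: L) (List.replicate e i)) = e + muS L + 1 := by
  rw [fold_mrg, muS_rep_gen, muS_cons_ne (mrg_ne_D i)]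
  omega

/-- In a run of equal letters, at most one letter is absorbed for free. -/
theorem runLB (e : ℕ) (L : List Sp) (i : Fin 2) :
    muS L + e ≤ muS (foldW L (List.replicate e i)) + 1 := by
  induction e generalizing L with
  | zero =>
    rw [show List.replicate 0 i = [] from rfl, foldW_nil]
    omega
  | succ e ih =>
    rcases L with _ | ⟨s, r⟩
    · rw [List.replicate_succ, foldW_cons, mulR_nil]
      have := runLB_push e [] i
      simp [muS, cntD] at this ⊢
      omega
    · rw [List.replicate_succ, foldW_cons]
      have hbubble : ∀ s' : Sp, s' ≠ sD →
          muS (s' :: r) + (e + 1) ≤ muS (foldW (r.map phiS ++ [sD]) (List.replicate e i)) + 1 := by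
        intro s' hs'
        have h1 := muS_bubble hs' r
        have h2 := ih (r.map phiS ++ [sD])
        omega
      have habsorb : ∀ s' : Sp, s' ≠ sD →
          muS (s' :: r) + (e + 1) ≤ muS (foldW (mrg i :: r) (List.replicate e i)) + 1 := by
        intro s' hs'
        have h1 := muS_fold_mrg e r i
        have h2 := muS_cons_ne hs' r
        omega
      by_cases hi : i = 0
      · subst hi
        cases s
        · rw [show mulR (sa :: r) 0 = genS 0 :: sa :: r from rfl]
          exact runLB_push e (sa :: r) 0
        · rw [show mulR (sb :: r) 0 = mrg 0 :: r from rfl]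
          exact habsorb sb (by simp)
        · rw [show mulR (sab :: r) 0 = r.map phiS ++ [sD] from rfl]
          exact hbubble sab (by simp)
        · rw [show mulR (sba :: r) 0 = genS 0 :: sba :: r from rfl]
          exact runLB_push e (sba :: r) 0
        · rw [show mulR (sD :: r) 0 = genS 0 :: sD :: r from rfl]
          exact runLB_push e (sD :: r) 0
      · have hi1 : i = 1 := Fin.eq_one_of_ne_zero i hi
        subst hi1
        cases s
        · rw [show mulR (sa :: r) 1 = mrg 1 :: r from rfl]
          exact habsorb sa (by simp)
        · rw [show mulR (sb :: r) 1 = genS 1 :: sb :: r from rfl]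
          exact runLB_push e (sb :: r) 1
        · rw [show mulR (sab :: r) 1 = genS 1 :: sab :: r from rfl]
          exact runLB_push e (sab :: r) 1
        · rw [show mulR (sba :: r) 1 = r.map phiS ++ [sD] from rfl]
          exact hbubble sba (by simp)
        · rw [show mulR (sD :: r) 1 = genS 1 :: sD :: r from rfl]
          exact runLB_push e (sD :: r) 1

theorem letterOf_succ (k : ℕ) : letterOf (k + 1) = swapF (letterOf k) := by
  rcases Nat.mod_two_eq_zero_or_one k with h | h <;>
    simp [letterOf, swapF, Nat.add_mod, h]

theorem wordOfExpSeq_cons (e : ℕ) (rest : List ℕ) :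
    wordOfExpSeq (e :: rest) =
      List.replicate e (letterOf (rest.length + 1)) ++ wordOfExpSeq rest := rfl

/-- Lower bound: each block loses at most one letter. -/
theorem lb_word (E : List ℕ) (L : List Sp) :
    E.sum + muS L ≤ muS (foldW L (wordOfExpSeq E)) + E.length := by
  induction E generalizing L with
  | nil => simp [wordOfExpSeq, foldW_nil]
  | cons e rest ih =>
    rw [wordOfExpSeq_cons, foldW_append]
    have h1 := runLB e L (letterOf (rest.length + 1))
    have h2 := ih (foldW L (List.replicate e (letterOf (rest.length + 1))))
    simp only [List.sum_cons, List.length_cons]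
    omega

/-- Abstract alternating block words. -/
def blocks (x : Fin 2) : List ℕ → List (Fin 2)
  | [] => []
  | e :: rest => List.replicate e x ++ blocks (swapF x) rest

theorem word_eq_blocks (E : List ℕ) : wordOfExpSeq E = blocks (letterOf E.length) E := by
  induction E with
  | nil => rfl
  | cons e rest ih =>
    rw [wordOfExpSeq_cons, ih]
    show _ = List.replicate e (letterOf (e :: rest).length) ++ blocks (swapF (letterOf (e :: rest).length)) rest
    have h1 : letterOf (e :: rest).length = letterOf (rest.length + 1) := rfl
    have h2 : swapF (letterOf (rest.length + 1)) = letterOf rest.length := by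
      rw [letterOf_succ, swapF_swapF]
    rw [h1, h2]

/-- Upper bound, generalized over the starting state. -/
theorem intGenB (E : List ℕ) (hne : E ≠ []) (h1 : ∀ y ∈ E, 1 ≤ y)
    (h2 : ∀ j, j + 1 < E.length → 2 ≤ E.getD j 0) :
    ∀ (x : Fin 2) (T : List Sp),
      muS (foldW (genS (swapF x) :: T) (blocks x E)) + E.length
        ≤ muS (genS (swapF x) :: T) + E.sum := by
  induction E with
  | nil => exact absurd rfl hne
  | cons e rest ih =>
    intro x T
    have he : 1 ≤ e := h1 e (by simp)
    rw [show blocks x (e :: rest) = List.replicate e x ++ blocks (swapF x) rest from rfl,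
      foldW_append, runExact e he T x]
    have hmu2 : muS (genS (swapF x) :: T) = muS T + 1 := muS_cons_ne (genS_ne_D _) T
    rcases rest with _ | ⟨f, rest'⟩
    · rw [show blocks (swapF x) [] = [] from rfl, foldW_nil]
      have hmu : muS (List.replicate (e - 1) (genS x) ++ mrg x :: T) = (e - 1) + muS T + 1 := by
        rw [muS_rep_gen, muS_cons_ne (mrg_ne_D x)]
        omega
      simp only [List.sum_cons, List.sum_nil, List.length_cons, List.length_nil]
      omega
    · have he2 : 2 ≤ e := by
        have := h2 0 (by simp)
        simpa using this
      obtain ⟨e', rfl⟩ : ∃ e', e = e' + 2 := ⟨e - 2, by omega⟩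
      have hsplit : List.replicate (e' + 2 - 1) (genS x) ++ mrg x :: T
          = genS (swapF (swapF x)) :: (List.replicate e' (genS x) ++ mrg x :: T) := by
        rw [swapF_swapF]
        simp [List.replicate_succ]
      rw [hsplit]
      have ihspec := ih (by simp) (fun y hy => h1 y (by simp [hy]))
        (fun j hj => by
          have := h2 (j + 1) (by simpa using Nat.succ_lt_succ hj)
          simpa using this)
        (swapF x) (List.replicate e' (genS x) ++ mrg x :: T)
      have hmuT' : muS (genS (swapF (swapF x)) :: (List.replicate e' (genS x) ++ mrg x :: T))
          = e' + muS T + 2 := by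
        rw [muS_cons_ne (genS_ne_D _), muS_rep_gen, muS_cons_ne (mrg_ne_D x)]
        omega
      simp only [List.sum_cons, List.length_cons] at *
      omega

/-- Upper bound for the blocks of `F = [e_p, …, e_2]` processed from the empty state. -/
theorem intTopB (F : List ℕ) (hne : F ≠ []) (h1 : ∀ y ∈ F, 1 ≤ y)
    (h2 : ∀ j, 0 < j → j + 1 < F.length → 2 ≤ F.getD j 0) (x : Fin 2) :
    muS (foldW [] (blocks x F)) + F.length ≤ F.sum + 1 := by
  rcases F with _ | ⟨e, rest⟩
  · exact absurd rfl hne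
  · have he : 1 ≤ e := h1 e (by simp)
    rw [show blocks x (e :: rest) = List.replicate e x ++ blocks (swapF x) rest from rfl,
      foldW_append, fold_nil_rep]
    have hmurep : muS (List.replicate e (genS x)) = e := by
      simp [muS, cntD_replicate_ne (genS_ne_D x)]
    rcases rest with _ | ⟨f, rest'⟩
    · rw [show blocks (swapF x) [] = [] from rfl, foldW_nil]
      simp only [List.sum_cons, List.sum_nil, List.length_cons, List.length_nil]
      omega
    · obtain ⟨e', rfl⟩ : ∃ e', e = e' + 1 := ⟨e - 1, by omega⟩
      have hsplit : List.replicate (e' + 1) (genS x)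
          = genS (swapF (swapF x)) :: List.replicate e' (genS x) := by
        rw [swapF_swapF]
        exact List.replicate_succ ..
      rw [hsplit]
      have ihspec := intGenB (f :: rest') (by simp) (fun y hy => h1 y (by simp [hy]))
        (fun j hj => by
          have := h2 (j + 1) (by omega) (by simpa using Nat.succ_lt_succ hj)
          simpa using this)
        (swapF x) (List.replicate e' (genS x))
      have hmuT : muS (genS (swapF (swapF x)) :: List.replicate e' (genS x)) = e' + 1 := by
        rw [muS_cons_ne (genS_ne_D _)]
        simp [muS, cntD_replicate_ne (genS_ne_D x)]
      simp only [List.sum_cons, List.length_cons] at *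
      omega

/-- The word (σ1σ2σ1)^n. -/
def dW : ℕ → List (Fin 2)
  | 0 => []
  | n + 1 => dW n ++ [0, 1, 0]

theorem mkw_dW (n : ℕ) : mkw (dW n) = Δ ^ n := by
  induction n with
  | zero => exact map_one braidCon.mk'
  | succ n ih => rw [dW, mkw_append, ih, pow_succ]; rfl

theorem fold_aba_repD (k : ℕ) :
    foldW (List.replicate k sD) [0, 1, 0] = List.replicate (k + 1) sD := by
  cases k with
  | zero => rfl
  | succ k =>
    show mulR (mulR (mulR (sD :: List.replicate k sD) 0) 1) 0 = _
    rw [show mulR (sD :: List.replicate k sD) 0 = sa :: sD :: List.replicate k sD from rfl,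
      show mulR (sa :: sD :: List.replicate k sD) 1 = sab :: sD :: List.replicate k sD from rfl,
      show mulR (sab :: sD :: List.replicate k sD) 0
        = (sD :: List.replicate k sD).map phiS ++ [sD] from rfl]
    simp [phiS, List.map_replicate]
    rw [← List.replicate_succ', ← List.replicate_succ]

theorem fold_dW (n : ℕ) : foldW [] (dW n) = List.replicate n sD := by
  induction n with
  | zero => rfl
  | succ n ih => rw [dW, foldW_append, ih, fold_aba_repD]

theorem cntD_fold_aba (N : List Sp) : cntD N + 1 ≤ cntD (foldW N [0, 1, 0]) := by
  have mono : ∀ (M : List Sp) (i : Fin 2), cntD M ≤ cntD (mulR M i) := cntD_mulR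
  rcases N with _ | ⟨s, r⟩
  · show cntD [] + 1 ≤ cntD (mulR (mulR (mulR [] 0) 1) 0)
    rw [show mulR (mulR (mulR ([] : List Sp) 0) 1) 0 = [sD] from rfl]
    simp [cntD, List.count_cons]
  · show cntD (s :: r) + 1 ≤ cntD (mulR (mulR (mulR (s :: r) 0) 1) 0)
    cases s
    · rw [show mulR (mulR (mulR (sa :: r) 0) 1) 0 = (sa :: r).map phiS ++ [sD] from rfl,
        cntD_bubble (sa :: r)]
    · rw [show mulR (mulR (sb :: r) 0) 1 = r.map phiS ++ [sD] from rfl]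
      have h1 := mono (r.map phiS ++ [sD]) 0
      have h2 := cntD_bubble r
      have h3 := cntD_cons_ne (show sb ≠ sD by simp) r
      omega
    · rw [show mulR (sab :: r) 0 = r.map phiS ++ [sD] from rfl]
      have h1 := mono (mulR (r.map phiS ++ [sD]) 1) 0
      have h2 := mono (r.map phiS ++ [sD]) 1
      have h3 := cntD_bubble r
      have h4 := cntD_cons_ne (show sab ≠ sD by simp) r
      omega
    · rw [show mulR (mulR (mulR (sba :: r) 0) 1) 0 = (sba :: r).map phiS ++ [sD] from rfl]
      have h2 := cntD_bubble (sba :: r)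
      have h3 := cntD_cons_ne (show sba ≠ sD by simp) r
      omega
    · rw [show mulR (mulR (mulR (sD :: r) 0) 1) 0 = (sD :: r).map phiS ++ [sD] from rfl]
      have h2 := cntD_bubble (sD :: r)
      omega

theorem cntD_fold_dW (d : ℕ) (N : List Sp) : cntD N + d ≤ cntD (foldW N (dW d)) := by
  induction d with
  | zero => simp [dW, foldW_nil]
  | succ d ih =>
    rw [dW, foldW_append]
    have := cntD_fold_aba (foldW N (dW d))
    omega

/-- The complementary word turning a simple factor into Δ. -/
def cwS : Sp → List (Fin 2)
  | sa => [1, 0]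
  | sb => [0, 1]
  | sab => [0]
  | sba => [1]
  | sD => []

/-- The complementary word of a factor list. -/
def compW : List Sp → List (Fin 2)
  | [] => []
  | s :: r => cwS s ++ compW (r.map phiS)
termination_by L => L.length
decreasing_by simp

theorem mulR_append_D (L : List Sp) (i : Fin 2) :
    mulR (L ++ [sD]) i = mulR L i ++ [sD] := by
  rcases L with _ | ⟨s, r⟩
  · by_cases hi : i = 0 <;> simp [mulR, hi]
  · by_cases hi : i = 0 <;> cases s <;> simp [mulR, hi, phiS]

theorem foldW_append_D (w : List (Fin 2)) (L : List Sp) :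
    foldW (L ++ [sD]) w = foldW L w ++ [sD] := by
  induction w generalizing L with
  | nil => rfl
  | cons i w ih => rw [foldW_cons, foldW_cons, mulR_append_D, ih]

theorem validD {r : List Sp} (h : Valid (sD :: r)) : r = List.replicate r.length sD := by
  induction r with
  | nil => rfl
  | cons t r' ih =>
    have ht : t = sD := adm_sD_right (valid_pair h)
    subst ht
    rw [List.length_cons, List.replicate_succ]
    exact congrArg (sD :: ·) (ih h.tail')

theorem compW_repD (k : ℕ) : compW (List.replicate k sD) = [] := by
  induction k with
  | zero => simp [compW]
  | succ k ih =>
    rw [List.replicate_succ, compW]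
    simp [cwS, List.map_replicate, phiS, ih]

theorem compW_spec : ∀ (n : ℕ) (L : List Sp), L.length = n → Valid L →
    foldW L (compW L) = List.replicate L.length sD := by
  intro n
  induction n with
  | zero =>
    intro L hL _
    rw [List.length_eq_zero_iff.mp hL]
    simp [compW, foldW_nil]
  | succ n ih =>
    intro L hL hV
    rcases L with _ | ⟨s, r⟩
    · simp at hL
    · have hrlen : r.length = n := by simpa using hL
      by_cases hs : s = sD
      · subst hs
        have hr := validD hV
        have hmap : r.map phiS = List.replicate r.length sD := by
          conv_lhs => rw [hr]
          simp [List.map_replicate, phiS]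
        have hcw : compW (sD :: r) = [] := by
          rw [compW, hmap, compW_repD]
          rfl
        rw [hcw, foldW_nil, List.length_cons, List.replicate_succ]
        exact congrArg (sD :: ·) hr
      · have hfold1 : foldW (s :: r) (cwS s) = r.map phiS ++ [sD] := by
          cases s <;> first | rfl | (exact absurd rfl hs)
        rw [compW, foldW_append, hfold1, foldW_append_D,
          ih (r.map phiS) (by simpa using hrlen) (valid_map_phiS hV.tail')]
        rw [List.length_map, List.length_cons, ← List.replicate_succ']

theorem decompD : ∀ L : List Sp, Valid L →
    ∃ M : List Sp, L = M ++ List.replicate (cntD L) sD := by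
  intro L hV
  induction L with
  | nil => exact ⟨[], rfl⟩
  | cons s r ih =>
    by_cases hs : s = sD
    · subst hs
      have hr := validD hV
      refine ⟨[], ?_⟩
      have hcnt : cntD r = r.length := by
        nth_rewrite 1 [hr]
        exact cntD_replicate_D _
      rw [List.nil_append, cntD_cons_D, hcnt, List.replicate_succ]
      exact congrArg (sD :: ·) hr
    · obtain ⟨M, hM⟩ := ih hV.tail'
      exact ⟨s :: M, by rw [cntD_cons_ne hs, List.cons_append, ← hM]⟩

theorem evL_repD (k : ℕ) : evL (List.replicate k sD) = Δ ^ k := by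
  unfold evL
  rw [List.reverse_replicate, List.map_replicate, List.prod_replicate]
  rfl

theorem muS_map_phiS (L : List Sp) : muS (L.map phiS) = muS L := by
  simp [muS, cntD_map_phiS]

theorem mulR_phi (L : List Sp) (i : Fin 2) :
    mulR (L.map phiS) (swapF i) = (mulR L i).map phiS := by
  by_cases hi : i = 0
  · subst hi
    rcases L with _ | ⟨s, r⟩ <;> [skip; cases s] <;>
      simp [mulR, phiS, swapF, map_phiS_phiS]
  · have hi1 : i = 1 := Fin.eq_one_of_ne_zero i hi
    subst hi1
    rcases L with _ | ⟨s, r⟩ <;> [skip; cases s] <;>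
      simp [mulR, phiS, swapF, map_phiS_phiS]

theorem foldW_phi (w : List (Fin 2)) (L : List Sp) :
    foldW (L.map phiS) (w.map swapF) = (foldW L w).map phiS := by
  induction w generalizing L with
  | nil => rfl
  | cons i w ih =>
    rw [List.map_cons, foldW_cons, foldW_cons, mulR_phi, ih]

theorem word_append_last (F : List ℕ) (e : ℕ) :
    wordOfExpSeq (F ++ [e]) = (wordOfExpSeq F).map swapF ++ List.replicate e (letterOf 1) := by
  induction F with
  | nil => simp [wordOfExpSeq]
  | cons f F' ih =>
    rw [List.cons_append, wordOfExpSeq_cons, wordOfExpSeq_cons, ih, List.map_append,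
      List.map_replicate]
    rw [show (F' ++ [e]).length = F'.length + 1 from by simp, letterOf_succ (F'.length + 1)]
    rw [List.append_assoc]

theorem getD_eq_of_lt (l : List ℕ) (j : ℕ) (h : j < l.length) : l.getD j 0 = l[j] := by
  simp [List.getD_eq_getElem?_getD, List.getElem?_eq_getElem h]

theorem emin_ge_one {k : ℕ} (h : 2 ≤ k) : 1 ≤ emin k := by
  rcases k with _ | _ | _ | k
  · omega
  · omega
  · exact le_refl 1
  · show 1 ≤ 2
    omega

theorem emin_eq_two {k : ℕ} (h : 3 ≤ k) : emin k = 2 := by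
  rcases k with _ | _ | _ | k
  · omega
  · omega
  · omega
  · rfl

/-- The main theorem, proved for the local copy of the statement. -/
theorem compl_formula_aux (b : B3P) (E : List ℕ) (hE : HasExpSeq b E) (d : ℕ)
    (hd : IsGreatest {d | ∃ c, b = c * Δ ^ d} d) :
    ∃ C, C ≤ 2 ∧ compl b + E.length + d = E.sum + C := by
  obtain ⟨⟨hEne, hEhead, hEmin⟩, hb⟩ := hE
  have hvalid : Valid (foldW [] (wordOfExpSeq E)) := valid_foldW valid_nil _
  set w : List (Fin 2) := wordOfExpSeq E with hw
  set N : List Sp := foldW [] w with hN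
  have hbN : b = evL N := by rw [← hb, mkw_sound]
  -- d = cntD N
  have hd_eq : d = cntD N := by
    have hmem : cntD N ∈ {d | ∃ c, b = c * Δ ^ d} := by
      obtain ⟨M, hM⟩ := decompD N hvalid
      refine ⟨phiB^[cntD N] (evL M), ?_⟩
      conv_lhs => rw [hbN, hM]
      rw [evL_append, evL_repD, delta_pow_comm]
    have hub : ∀ d' ∈ {d | ∃ c, b = c * Δ ^ d}, d' ≤ cntD N := by
      rintro d' ⟨c, hc⟩
      obtain ⟨u, rfl⟩ := mkw_surj c
      have heq : mkw (u ++ dW d') = mkw w := by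
        rw [mkw_append, mkw_dW, ← hc, hb]
      have h2 := foldW_eq_of_mkw_eq heq [] valid_nil
      rw [foldW_append, ← hN] at h2
      have h3 := cntD_fold_dW d' (foldW [] u)
      rw [h2] at h3
      omega
    exact le_antisymm (hub d hd.1) (hd.2 hmem)
  -- compl b = N.length
  have hcompl : compl b = N.length := by
    have hmem : N.length ∈ {ℓ | ∃ c, b * c = Δ ^ ℓ} := by
      refine ⟨mkw (compW N), ?_⟩
      rw [← hb, ← mkw_append, mkw_sound, foldW_append, ← hN,
        compW_spec N.length N rfl hvalid, evL_repD]
    have hlb : ∀ ℓ ∈ {ℓ | ∃ c, b * c = Δ ^ ℓ}, N.length ≤ ℓ := by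
      rintro ℓ ⟨c, hc⟩
      obtain ⟨u, rfl⟩ := mkw_surj c
      have heq : mkw (w ++ u) = mkw (dW ℓ) := by
        rw [mkw_append, hb, hc, mkw_dW]
      have h2 := foldW_eq_of_mkw_eq heq [] valid_nil
      rw [foldW_append, ← hN, fold_dW] at h2
      have h3 := length_foldW N u
      rw [h2] at h3
      simpa using h3
    exact le_antisymm (Nat.sInf_le hmem) (le_csInf ⟨N.length, hmem⟩ hlb)
  -- lower bound
  have hLB : E.sum ≤ muS N + E.length := by
    have h := lb_word E []
    rw [← hw, ← hN] at h
    have hmu0 : muS ([] : List Sp) = 0 := rfl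
    omega
  -- upper bound
  have hUB : muS N + E.length ≤ E.sum + 2 := by
    have hp : 0 < E.length := List.length_pos_iff.mpr hEne
    by_cases hp1 : E.length = 1
    · obtain ⟨e, rfl⟩ := List.length_eq_one_iff.mp hp1
      have hNval : N = List.replicate e (genS (letterOf 1)) := by
        rw [hN, hw, show wordOfExpSeq [e] = List.replicate e (letterOf 1) from by
          simp [wordOfExpSeq], fold_nil_rep]
      rw [hNval]
      have : muS (List.replicate e (genS (letterOf 1))) = e := by
        simp [muS, cntD_replicate_ne (genS_ne_D _)]
      simp only [List.sum_cons, List.sum_nil, List.length_cons, List.length_nil]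
      omega
    · have hp2 : 2 ≤ E.length := by omega
      have hEeq : E.dropLast ++ [E.getLast hEne] = E := List.dropLast_append_getLast hEne
      set F := E.dropLast with hF
      set e1 := E.getLast hEne with he1
      have hFlen : F.length = E.length - 1 := by
        rw [hF, List.length_dropLast]
      have hFne : F ≠ [] := by
        intro hcon
        rw [hcon] at hFlen
        simp at hFlen
        omega
      -- index facts
      have hgetD : ∀ j, j < F.length → F.getD j 0 = E.getD j 0 := by
        intro j hj
        have hj' : j < E.length := by omega
        rw [getD_eq_of_lt F j hj, getD_eq_of_lt E j hj']
        exact List.getElem_dropLast (xs := E) (i := j) (by rwa [← hF])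
      have hsub : ∀ j, j < E.length → E.length - (E.length - j) = j := by
        intro j hj
        omega
      have h1 : ∀ y ∈ F, 1 ≤ y := by
        intro y hy
        obtain ⟨j, hj, rfl⟩ := List.mem_iff_getElem.mp hy
        rw [← getD_eq_of_lt F j hj, hgetD j hj]
        rcases Nat.eq_zero_or_pos j with hj0 | hj0
        · subst hj0
          have : expAt E E.length = E.getD 0 0 := by
            unfold expAt
            rw [Nat.sub_self]
          omega
        · have hk1 : 1 ≤ E.length - j := by omega
          have hk2 : E.length - j < E.length := by omega
          have := hEmin (E.length - j) hk1 hk2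
          unfold expAt at this
          rw [hsub j (by omega)] at this
          have hkk : 2 ≤ E.length - j := by omega
          have := emin_ge_one hkk
          omega
      have h2 : ∀ j, 0 < j → j + 1 < F.length → 2 ≤ F.getD j 0 := by
        intro j hj0 hj1
        rw [hgetD j (by omega)]
        have hk1 : 1 ≤ E.length - j := by omega
        have hk2 : E.length - j < E.length := by omega
        have h := hEmin (E.length - j) hk1 hk2
        unfold expAt at h
        rw [hsub j (by omega)] at h
        have hk3 : 3 ≤ E.length - j := by omega
        rw [emin_eq_two hk3] at h
        exact h
      -- split the word
      have hws : w = (wordOfExpSeq F).map swapF ++ List.replicate e1 (letterOf 1) := by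
        rw [hw, ← hEeq]
        exact word_append_last F e1
      have hNsplit : N = foldW ((foldW [] (wordOfExpSeq F)).map phiS)
          (List.replicate e1 (letterOf 1)) := by
        rw [hN, hws, foldW_append]
        congr 1
        rw [← foldW_phi]
        rfl
      have hstep1 : muS N ≤ muS (foldW [] (wordOfExpSeq F)) + e1 := by
        rw [hNsplit]
        have := muS_foldW_le ((foldW [] (wordOfExpSeq F)).map phiS)
          (List.replicate e1 (letterOf 1))
        rw [muS_map_phiS] at this
        simpa using this
      have hstep2 : muS (foldW [] (wordOfExpSeq F)) + F.length ≤ F.sum + 1 := by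
        rw [word_eq_blocks F]
        exact intTopB F hFne h1 h2 (letterOf F.length)
      have hsum : E.sum = F.sum + e1 := by
        conv_lhs => rw [← hEeq]
        simp
      have hlen : E.length = F.length + 1 := by
        omega
      omega
  refine ⟨muS N + E.length - E.sum, by omega, ?_⟩
  rw [hcompl, hd_eq]
  have : muS N = N.length + cntD N := rfl
  omega


/-- ‖b‖ = |b| − p − d(b) + C for some C ∈ {0, 1, 2}, where p is the breadth of b,
|b| = e_p + ⋯ + e_1 is the common length of all words representing b, and d(b)
is the maximal d with Δ₃^d a right divisor of b. (Stated additively.) -/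
theorem compl_formula (b : B3P) (E : List ℕ) (hE : HasExpSeq b E) (d : ℕ)
    (hd : IsGreatest {d | ∃ c, b = c * Δ ^ d} d) :
    ∃ C, C ≤ 2 ∧ compl b + E.length + d = E.sum + C :=
  compl_formula_aux b E hE d hd

end Braid3
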